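/- arXiv:math/0212069 — 3 statements merged into one kernel-verified Lean document; each statement's English description precedes it below -/
import Mathlib

section
/- Let λ ∈ (0,1), M > 0, and let f : (0,∞) → (0,∞) be non-increasing, log-convex, and satisfy f(τ) ≤ M τ^{-λ} for all τ > 0. Fix t > 0 and α ∈ (0, 1/2], and set δ := f(t) t^{λ} / M ∈ (0,1]. Then ∫₀^∞ e^{-s} f(ts) ds ≤ M t^{-λ} ( ∫₀¹ (αs)^{-λ} δ^{p(s)} ds + e^{-1} δ ), where p(s) := s(1-α)/(1-αs). -/
set_option maxHeartbeats 800000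

open MeasureTheory

/-- Abstract form of Davies' Green's function upper bound: if `f : (0,∞) → (0,∞)` is
non-increasing, log-convex and satisfies `f τ ≤ M τ^(-λ)`, then with
`δ = f t * t^λ / M` and `p(s) = s(1-α)/(1-αs)` one has
`∫₀^∞ e^(-s) f(ts) ds ≤ M t^(-λ) (∫₀¹ (αs)^(-λ) δ^(p s) ds + e⁻¹ δ)`. -/
theorem davies_green_function_bound (f : ℝ → ℝ) (lam M : ℝ)
    (hlam0 : 0 < lam) (hlam1 : lam < 1) (hM : 0 < M)
    (hf_pos : ∀ τ ∈ Set.Ioi (0 : ℝ), 0 < f τ)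
    (hf_anti : AntitoneOn f (Set.Ioi (0 : ℝ)))
    (hf_logconvex : ConvexOn ℝ (Set.Ioi (0 : ℝ)) (fun τ => Real.log (f τ)))
    (hf_bound : ∀ τ ∈ Set.Ioi (0 : ℝ), f τ ≤ M * τ ^ (-lam))
    (t α δ : ℝ) (ht : 0 < t) (hα0 : 0 < α) (hα : α ≤ 1 / 2)
    (hδ : δ = f t * t ^ lam / M) :
    ∫ s in Set.Ioi (0 : ℝ), Real.exp (-s) * f (t * s) ≤
      M * t ^ (-lam) *
        ((∫ s in (0 : ℝ)..1, (α * s) ^ (-lam) * δ ^ (s * (1 - α) / (1 - α * s))) +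
          Real.exp (-1) * δ) := by
  have htlam : (0:ℝ) < t ^ (-lam) := Real.rpow_pos_of_pos ht _
  have htlam' : (0:ℝ) < t ^ lam := Real.rpow_pos_of_pos ht _
  have hft : 0 < f t := hf_pos t ht
  have hδ0 : 0 < δ := by rw [hδ]; positivity
  have hδ1 : δ ≤ 1 := by
    rw [hδ, div_le_one hM]
    have h := hf_bound t ht
    calc f t * t ^ lam ≤ M * t ^ (-lam) * t ^ lam := by nlinarith
      _ = M := by rw [mul_assoc, ← Real.rpow_add ht]; simp
  have hfteq : f t = M * t ^ (-lam) * δ := by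
    rw [hδ]
    field_simp
    rw [← Real.rpow_add ht]
    simp
  -- pointwise bound on (0,1]
  have key : ∀ s ∈ Set.Ioc (0:ℝ) 1,
      Real.exp (-s) * f (t * s) ≤
        M * t ^ (-lam) * ((α * s) ^ (-lam) * δ ^ (s * (1 - α) / (1 - α * s))) := by
    intro s hs
    obtain ⟨hs0, hs1⟩ := hs
    have hαs : α * s ≤ 1 / 2 := by nlinarith
    have h1as : (0:ℝ) < 1 - α * s := by linarith
    set q : ℝ := s * (1 - α) / (1 - α * s) with hqdef
    have hq0 : 0 ≤ q := div_nonneg (by nlinarith) h1as.le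
    have hq1 : q ≤ 1 := by rw [hqdef, div_le_one h1as]; nlinarith
    have hmemx : α * t * s ∈ Set.Ioi (0:ℝ) := by
      simp only [Set.mem_Ioi]; positivity
    have hmemts : t * s ∈ Set.Ioi (0:ℝ) := by
      simp only [Set.mem_Ioi]; positivity
    have hcomb : (1 - q) • (α * t * s) + q • t = t * s := by
      simp only [smul_eq_mul]
      rw [hqdef]
      linear_combination (s * (1 - α) * t) * mul_inv_cancel₀ h1as.ne'
    have hlog := hf_logconvex.2 hmemx (Set.mem_Ioi.mpr ht)
      (by linarith : (0:ℝ) ≤ 1 - q) hq0 (by ring)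
    rw [hcomb] at hlog
    have hfts : f (t * s) ≤ f (α * t * s) ^ (1 - q) * f t ^ q := by
      have h1 : f (t * s) = Real.exp (Real.log (f (t * s))) :=
        (Real.exp_log (hf_pos _ hmemts)).symm
      rw [h1, Real.rpow_def_of_pos (hf_pos _ hmemx), Real.rpow_def_of_pos hft,
        ← Real.exp_add]
      apply Real.exp_le_exp.mpr
      simpa only [smul_eq_mul, mul_comm] using hlog
    set A : ℝ := M * (α * t * s) ^ (-lam) with hAdef
    have hA : 0 < A := by positivity
    have hx : f (α * t * s) ≤ A := hf_bound _ hmemx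
    have hts_le : α * t * s ≤ t := by nlinarith
    have hy : f t ≤ A * δ := by
      rw [hfteq]
      have hr : t ^ (-lam) ≤ (α * t * s) ^ (-lam) :=
        Real.rpow_le_rpow_of_nonpos (by positivity) hts_le (by linarith)
      rw [hAdef]
      nlinarith
    have hchain : f (t * s) ≤ A * δ ^ q := by
      have h2 : f (α * t * s) ^ (1 - q) * f t ^ q ≤ A ^ (1 - q) * (A * δ) ^ q := by
        apply mul_le_mul
        · exact Real.rpow_le_rpow (hf_pos _ hmemx).le hx (by linarith)
        · exact Real.rpow_le_rpow hft.le hy hq0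
        · positivity
        · positivity
      have h3 : A ^ (1 - q) * (A * δ) ^ q = A * δ ^ q := by
        rw [Real.mul_rpow hA.le hδ0.le, ← mul_assoc, ← Real.rpow_add hA]
        norm_num
      linarith [hfts, h2.trans_eq h3]
    have hexp : Real.exp (-s) ≤ 1 := Real.exp_le_one_iff.mpr (by linarith)
    have hA_eq : A = M * t ^ (-lam) * (α * s) ^ (-lam) := by
      rw [hAdef, show α * t * s = t * (α * s) by ring,
        Real.mul_rpow ht.le (by positivity)]
      ring
    have hfpos : 0 < f (t * s) := hf_pos _ hmemts
    calc Real.exp (-s) * f (t * s) ≤ 1 * f (t * s) := by nlinarith [Real.exp_pos (-s)]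
      _ = f (t * s) := one_mul _
      _ ≤ A * δ ^ q := hchain
      _ = M * t ^ (-lam) * ((α * s) ^ (-lam) * δ ^ q) := by rw [hA_eq]; ring
  -- measurability
  have hg_anti : AntitoneOn (fun s => f (t * s)) (Set.Ioi (0:ℝ)) := by
    intro x hx y hy hxy
    exact hf_anti (Set.mem_Ioi.mpr (mul_pos ht hx)) (Set.mem_Ioi.mpr (mul_pos ht hy))
      (mul_le_mul_of_nonneg_left hxy ht.le)
  have hg_meas : AEMeasurable (fun s => f (t * s)) (volume.restrict (Set.Ioi (0:ℝ))) :=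
    aemeasurable_restrict_of_antitoneOn measurableSet_Ioi hg_anti
  have hmeas1 : AEStronglyMeasurable (fun s => Real.exp (-s) * f (t * s))
      (volume.restrict (Set.Ioc (0:ℝ) 1)) := by
    refine AEStronglyMeasurable.mul ?_ ?_
    · exact (Real.continuous_exp.comp continuous_neg).aestronglyMeasurable
    · exact (hg_meas.mono_measure
        (Measure.restrict_mono Set.Ioc_subset_Ioi_self le_rfl)).aestronglyMeasurable
  have hmeas2 : AEStronglyMeasurable (fun s => Real.exp (-s) * f (t * s))
      (volume.restrict (Set.Ioi (1:ℝ))) := by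
    refine AEStronglyMeasurable.mul ?_ ?_
    · exact (Real.continuous_exp.comp continuous_neg).aestronglyMeasurable
    · exact (hg_meas.mono_measure
        (Measure.restrict_mono (Set.Ioi_subset_Ioi (by norm_num)) le_rfl)).aestronglyMeasurable
  have hint_rpow : IntegrableOn (fun s : ℝ => s ^ (-lam)) (Set.Ioc (0:ℝ) 1) := by
    have h := intervalIntegral.intervalIntegrable_rpow' (a := (0:ℝ)) (b := 1) (r := -lam) (by linarith)
    rwa [intervalIntegrable_iff_integrableOn_Ioc_of_le (by norm_num)] at h
  have hbound1 : IntegrableOn (fun s : ℝ => M * t ^ (-lam) * s ^ (-lam)) (Set.Ioc (0:ℝ) 1) :=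
    hint_rpow.const_mul _
  have hint1 : IntegrableOn (fun s => Real.exp (-s) * f (t * s)) (Set.Ioc (0:ℝ) 1) := by
    apply Integrable.mono' hbound1 hmeas1
    filter_upwards [ae_restrict_mem measurableSet_Ioc] with s hs
    obtain ⟨hs0, hs1⟩ := hs
    have hfpos : 0 < f (t * s) := hf_pos _ (Set.mem_Ioi.mpr (by positivity))
    have hb := hf_bound (t * s) (Set.mem_Ioi.mpr (by positivity))
    rw [Real.norm_eq_abs, abs_of_pos (by positivity)]
    have hmr : (t * s) ^ (-lam) = t ^ (-lam) * s ^ (-lam) :=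
      Real.mul_rpow ht.le hs0.le
    have hexp : Real.exp (-s) ≤ 1 := Real.exp_le_one_iff.mpr (by linarith)
    calc Real.exp (-s) * f (t * s) ≤ 1 * f (t * s) := by
          nlinarith [Real.exp_pos (-s)]
      _ = f (t * s) := one_mul _
      _ ≤ M * (t * s) ^ (-lam) := hb
      _ = M * t ^ (-lam) * s ^ (-lam) := by rw [hmr]; ring
  have hint_exp : IntegrableOn (fun s : ℝ => Real.exp (-s)) (Set.Ioi (1:ℝ)) := by
    have h := exp_neg_integrableOn_Ioi (1:ℝ) (b := 1) one_pos
    simpa using h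
  have hint2 : IntegrableOn (fun s => Real.exp (-s) * f (t * s)) (Set.Ioi (1:ℝ)) := by
    apply Integrable.mono' (hint_exp.mul_const (M * t ^ (-lam) * δ)) hmeas2
    filter_upwards [ae_restrict_mem measurableSet_Ioi] with s hs
    have hs1 : (1:ℝ) < s := hs
    have hfpos : 0 < f (t * s) := hf_pos _ (Set.mem_Ioi.mpr (by positivity))
    rw [Real.norm_eq_abs, abs_of_pos (by positivity)]
    have hft_le : f (t * s) ≤ f t := by
      apply hf_anti (Set.mem_Ioi.mpr ht) (Set.mem_Ioi.mpr (by positivity))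
      nlinarith
    have : f (t * s) ≤ M * t ^ (-lam) * δ := by rw [← hfteq]; exact hft_le
    exact mul_le_mul_of_nonneg_left this (Real.exp_pos (-s)).le
  have hint_rhs : IntegrableOn
      (fun s => M * t ^ (-lam) * ((α * s) ^ (-lam) * δ ^ (s * (1 - α) / (1 - α * s))))
      (Set.Ioc (0:ℝ) 1) := by
    apply Integrable.mono' ((hint_rpow.const_mul (α ^ (-lam))).const_mul (M * t ^ (-lam)))
    · have hcont : ContinuousOn
          (fun s : ℝ => (α * s) ^ (-lam) * δ ^ (s * (1 - α) / (1 - α * s)))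
          (Set.Ioc (0:ℝ) 1) := by
        apply ContinuousOn.mul
        · apply ContinuousOn.rpow_const (continuousOn_const.mul continuousOn_id)
          intro x hx
          exact Or.inl (ne_of_gt (mul_pos hα0 hx.1))
        · have heq : ∀ s : ℝ, δ ^ (s * (1 - α) / (1 - α * s)) =
              Real.exp (Real.log δ * (s * (1 - α) / (1 - α * s))) := fun s =>
            Real.rpow_def_of_pos hδ0 _
          simp only [heq]
          apply Real.continuous_exp.comp_continuousOn
          apply ContinuousOn.mul continuousOn_const
          apply ContinuousOn.div (continuousOn_id.mul continuousOn_const)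
            (continuousOn_const.sub (continuousOn_const.mul continuousOn_id))
          intro x hx
          have hx2 : α * x ≤ 1/2 := by nlinarith [hx.1, hx.2]
          simp only [Pi.sub_apply, Pi.mul_apply, id]
          intro hcontra
          nlinarith
      exact ((hcont.aestronglyMeasurable measurableSet_Ioc).const_mul (M * t ^ (-lam)))
    · filter_upwards [ae_restrict_mem measurableSet_Ioc] with s hs
      obtain ⟨hs0, hs1⟩ := hs
      have h1as : (0:ℝ) < 1 - α * s := by nlinarith
      have hq0 : 0 ≤ s * (1 - α) / (1 - α * s) := div_nonneg (by nlinarith) h1as.le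
      have hδq : δ ^ (s * (1 - α) / (1 - α * s)) ≤ 1 :=
        Real.rpow_le_one hδ0.le hδ1 hq0
      have hδqpos : 0 < δ ^ (s * (1 - α) / (1 - α * s)) := Real.rpow_pos_of_pos hδ0 _
      have hαspos : (0:ℝ) < (α * s) ^ (-lam) := Real.rpow_pos_of_pos (by positivity) _
      rw [Real.norm_eq_abs, abs_of_pos (by positivity)]
      have hmr : (α * s) ^ (-lam) = α ^ (-lam) * s ^ (-lam) :=
        Real.mul_rpow hα0.le hs0.le
      calc M * t ^ (-lam) * ((α * s) ^ (-lam) * δ ^ (s * (1 - α) / (1 - α * s)))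
          ≤ M * t ^ (-lam) * ((α * s) ^ (-lam) * 1) := by
            apply mul_le_mul_of_nonneg_left _ (by positivity : (0:ℝ) ≤ M * t ^ (-lam))
            exact mul_le_mul_of_nonneg_left hδq hαspos.le
        _ = M * t ^ (-lam) * (α ^ (-lam) * s ^ (-lam)) := by rw [hmr]; ring
  -- split the integral
  have hsplit : ∫ s in Set.Ioi (0:ℝ), Real.exp (-s) * f (t * s) =
      (∫ s in Set.Ioc (0:ℝ) 1, Real.exp (-s) * f (t * s)) +
      ∫ s in Set.Ioi (1:ℝ), Real.exp (-s) * f (t * s) := by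
    rw [← Set.Ioc_union_Ioi_eq_Ioi (by norm_num : (0:ℝ) ≤ 1)]
    exact setIntegral_union (Set.Ioc_disjoint_Ioi le_rfl) measurableSet_Ioi hint1 hint2
  have hp1 : (∫ s in Set.Ioc (0:ℝ) 1, Real.exp (-s) * f (t * s)) ≤
      ∫ s in Set.Ioc (0:ℝ) 1,
        M * t ^ (-lam) * ((α * s) ^ (-lam) * δ ^ (s * (1 - α) / (1 - α * s))) :=
    setIntegral_mono_on hint1 hint_rhs measurableSet_Ioc key
  have hp2 : (∫ s in Set.Ioi (1:ℝ), Real.exp (-s) * f (t * s)) ≤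
      ∫ s in Set.Ioi (1:ℝ), Real.exp (-s) * (M * t ^ (-lam) * δ) := by
    apply setIntegral_mono_on hint2 (hint_exp.mul_const _) measurableSet_Ioi
    intro s hs
    have hs1 : (1:ℝ) < s := hs
    have hft_le : f (t * s) ≤ f t := by
      apply hf_anti (Set.mem_Ioi.mpr ht) (Set.mem_Ioi.mpr (by positivity))
      nlinarith
    have : f (t * s) ≤ M * t ^ (-lam) * δ := by rw [← hfteq]; exact hft_le
    exact mul_le_mul_of_nonneg_left this (Real.exp_pos (-s)).le
  have hval2 : (∫ s in Set.Ioi (1:ℝ), Real.exp (-s) * (M * t ^ (-lam) * δ)) =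
      Real.exp (-1) * (M * t ^ (-lam) * δ) := by
    rw [integral_mul_const, integral_exp_neg_Ioi]
  have hval1 : (∫ s in Set.Ioc (0:ℝ) 1,
      M * t ^ (-lam) * ((α * s) ^ (-lam) * δ ^ (s * (1 - α) / (1 - α * s)))) =
      M * t ^ (-lam) *
        ∫ s in (0:ℝ)..1, (α * s) ^ (-lam) * δ ^ (s * (1 - α) / (1 - α * s)) := by
    rw [intervalIntegral.integral_of_le (by norm_num : (0:ℝ) ≤ 1), integral_const_mul]
  rw [hsplit]
  calc (∫ s in Set.Ioc (0:ℝ) 1, Real.exp (-s) * f (t * s)) +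
        ∫ s in Set.Ioi (1:ℝ), Real.exp (-s) * f (t * s)
      ≤ (∫ s in Set.Ioc (0:ℝ) 1,
          M * t ^ (-lam) * ((α * s) ^ (-lam) * δ ^ (s * (1 - α) / (1 - α * s)))) +
        ∫ s in Set.Ioi (1:ℝ), Real.exp (-s) * (M * t ^ (-lam) * δ) := by
        exact add_le_add hp1 hp2
    _ = M * t ^ (-lam) *
        ((∫ s in (0:ℝ)..1, (α * s) ^ (-lam) * δ ^ (s * (1 - α) / (1 - α * s))) +
          Real.exp (-1) * δ) := by rw [hval1, hval2]; ring
end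

section
/- Let 0 < α ≤ 1/2, 0 < λ < 1, and 0 < δ < 1, and for s ∈ (0,1) set p(s) := s(1-α)/(1-αs). Then ∫₀¹ (αs)^{-λ} δ^{p(s)} ds + e^{-1} δ < ( Γ(1-λ)/α + (1-λ)^{1-λ} e^{λ-2} ) · (log(1/δ))^{λ-1}, where Γ denotes the Gamma function. -/
open MeasureTheory Set Real
open scoped ENNReal

/-- Davies' estimate: for `0 < α ≤ 1/2`, `0 < λ < 1`, `0 < δ < 1` and
`p(s) = s(1-α)/(1-αs)` one has
`∫₀¹ (αs)^(-λ) δ^(p s) ds + e⁻¹ δ < (Γ(1-λ)/α + (1-λ)^(1-λ) e^(λ-2)) (log(1/δ))^(λ-1)`. -/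
theorem davies_integral_estimate (α lam δ : ℝ)
    (hα0 : 0 < α) (hα : α ≤ 1 / 2)
    (hlam0 : 0 < lam) (hlam1 : lam < 1)
    (hδ0 : 0 < δ) (hδ1 : δ < 1) :
    (∫ s in (0 : ℝ)..1, (α * s) ^ (-lam) * δ ^ (s * (1 - α) / (1 - α * s))) +
        Real.exp (-1) * δ <
      (Real.Gamma (1 - lam) / α + (1 - lam) ^ (1 - lam) * Real.exp (lam - 2)) *
        Real.log (1 / δ) ^ (lam - 1) := by
  set L : ℝ := Real.log (1 / δ) with hLdef
  have hL : 0 < L := Real.log_pos (by rw [lt_div_iff₀ hδ0]; linarith)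
  have hlogδ : Real.log δ = -L := by
    rw [hLdef, one_div, Real.log_inv, neg_neg]
  set b : ℝ := α * L with hbdef
  have hb : 0 < b := mul_pos hα0 hL
  set f : ℝ → ℝ := fun s => (α * s) ^ (-lam) * δ ^ (s * (1 - α) / (1 - α * s)) with hfdef
  set g : ℝ → ℝ := fun s => α ^ (-lam) * (s ^ (-lam) * Real.exp (-(b * s))) with hgdef
  -- integrability of the comparison function on (0,∞)
  have hg_int : IntegrableOn (fun s : ℝ => s ^ (-lam) * Real.exp (-(b * s))) (Ioi 0) := by
    have := integrableOn_rpow_mul_exp_neg_mul_rpow (s := -lam) (p := 1) (b := b)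
      (by linarith) zero_lt_one hb
    refine this.congr_fun (fun x hx => ?_) measurableSet_Ioi
    simp only [Real.rpow_one, neg_mul]
  have hg_int' : IntegrableOn g (Ioi 0) := hg_int.const_mul _
  -- value of the improper integral
  have hg_val : ∫ s in Ioi (0:ℝ), g s = Real.Gamma (1 - lam) / α * L ^ (lam - 1) := by
    rw [hgdef, MeasureTheory.integral_const_mul]
    have h1 : ∫ s in Ioi (0:ℝ), s ^ (-lam) * Real.exp (-(b * s))
        = (1 / b) ^ (1 - lam) * Real.Gamma (1 - lam) := by
      have := Real.integral_rpow_mul_exp_neg_mul_Ioi (a := 1 - lam) (r := b)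
        (by linarith) hb
      simpa using this
    rw [h1]
    have h2 : (1 / b) ^ (1 - lam) = α ^ (lam - 1) * L ^ (lam - 1) := by
      rw [one_div, ← Real.rpow_neg_one b, ← Real.rpow_mul hb.le, neg_one_mul,
        neg_sub, hbdef, Real.mul_rpow hα0.le hL.le]
    rw [h2]
    have h3 : α ^ (-lam) * α ^ (lam - 1) = 1 / α := by
      rw [← Real.rpow_add hα0, one_div, ← Real.rpow_neg_one α]
      congr 1
      ring
    calc α ^ (-lam) * (α ^ (lam - 1) * L ^ (lam - 1) * Real.Gamma (1 - lam))
        = (α ^ (-lam) * α ^ (lam - 1)) * L ^ (lam - 1) * Real.Gamma (1 - lam) := by ring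
      _ = Real.Gamma (1 - lam) / α * L ^ (lam - 1) := by rw [h3]; ring
  -- pointwise bound on (0,1]
  have hfg : ∀ s ∈ Ioc (0:ℝ) 1, 0 ≤ f s ∧ f s ≤ g s := by
    intro s hs
    obtain ⟨hs0, hs1⟩ := hs
    have hαs : α * s ≤ 1 / 2 := by nlinarith
    have h1αs : 0 < 1 - α * s := by linarith
    have hq : α * s ≤ s * (1 - α) / (1 - α * s) := by
      rw [le_div_iff₀ h1αs]
      nlinarith [mul_nonneg hs0.le (mul_nonneg (mul_nonneg hα0.le hα0.le) hs0.le),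
        mul_nonneg hs0.le (by linarith : (0:ℝ) ≤ 1 - 2 * α)]
    have hδpow : δ ^ (s * (1 - α) / (1 - α * s)) = Real.exp (-(L * (s * (1 - α) / (1 - α * s)))) := by
      rw [Real.rpow_def_of_pos hδ0, hlogδ]; ring_nf
    constructor
    · exact mul_nonneg (Real.rpow_nonneg (by positivity) _) (Real.rpow_nonneg hδ0.le _)
    · have hsplit : (α * s) ^ (-lam) = α ^ (-lam) * s ^ (-lam) :=
        Real.mul_rpow hα0.le hs0.le
      have hexp : Real.exp (-(L * (s * (1 - α) / (1 - α * s)))) ≤ Real.exp (-(b * s)) := by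
        apply Real.exp_le_exp.mpr
        have : b * s ≤ L * (s * (1 - α) / (1 - α * s)) := by
          rw [hbdef]
          have := mul_le_mul_of_nonneg_left hq hL.le
          calc α * L * s = L * (α * s) := by ring
            _ ≤ L * (s * (1 - α) / (1 - α * s)) := this
        linarith
      calc f s = α ^ (-lam) * s ^ (-lam) * Real.exp (-(L * (s * (1 - α) / (1 - α * s)))) := by
            rw [hfdef]; simp only; rw [hsplit, hδpow]
        _ ≤ α ^ (-lam) * s ^ (-lam) * Real.exp (-(b * s)) := by
            apply mul_le_mul_of_nonneg_left hexp
            positivity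
        _ = g s := by rw [hgdef]; ring
  -- integrability of f on (0,1]
  have hg_Ioc : IntegrableOn g (Ioc 0 1) := hg_int'.mono_set Ioc_subset_Ioi_self
  have hf_meas : AEStronglyMeasurable f (volume.restrict (Ioc (0:ℝ) 1)) := by
    have m1 : Measurable fun s : ℝ => (α * s) ^ (-lam) :=
      (measurable_const.mul measurable_id).pow measurable_const
    have m2 : Measurable fun s : ℝ => δ ^ (s * (1 - α) / (1 - α * s)) :=
      measurable_const.pow ((measurable_id.mul_const _).div
        (measurable_const.sub (measurable_const.mul measurable_id)))
    exact (m1.mul m2).aestronglyMeasurable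
  have hf_int : IntegrableOn f (Ioc 0 1) := by
    refine hg_Ioc.integrable.mono hf_meas ?_
    filter_upwards [ae_restrict_mem measurableSet_Ioc] with s hs
    obtain ⟨h0, h1⟩ := hfg s hs
    rw [Real.norm_eq_abs, Real.norm_eq_abs, abs_of_nonneg h0]
    exact h1.trans (le_abs_self _)
  -- compare the integrals
  have hII : ∫ s in (0:ℝ)..1, f s ≤ ∫ s in Ioc (0:ℝ) 1, g s := by
    rw [intervalIntegral.integral_of_le zero_le_one]
    exact setIntegral_mono_on hf_int hg_Ioc measurableSet_Ioc (fun s hs => (hfg s hs).2)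
  -- the tail integral is positive
  have hg_Ioi1 : IntegrableOn g (Ioi 1) := hg_int'.mono_set (Ioi_subset_Ioi zero_le_one)
  have htail : 0 < ∫ s in Ioi (1:ℝ), g s := by
    refine (setIntegral_pos_iff_support_of_nonneg_ae ?nn hg_Ioi1).mpr ?_
    case nn =>
      filter_upwards [ae_restrict_mem measurableSet_Ioi] with s hs
      have hs0 : (0:ℝ) < s := lt_trans zero_lt_one hs
      simp only [Pi.zero_apply, hgdef]
      positivity
    · have hsub : Ioi (1:ℝ) ⊆ Function.support g ∩ Ioi 1 := by
        intro x hx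
        refine ⟨?_, hx⟩
        have hx0 : (0:ℝ) < x := lt_trans zero_lt_one hx
        simp only [Function.mem_support, hgdef]
        positivity
      calc (0:ℝ≥0∞) < volume (Ioi (1:ℝ)) := by simp
        _ ≤ volume (Function.support g ∩ Ioi 1) := measure_mono hsub
  -- splitting the improper integral
  have hsplit : ∫ s in Ioi (0:ℝ), g s
      = (∫ s in Ioc (0:ℝ) 1, g s) + ∫ s in Ioi (1:ℝ), g s := by
    rw [← setIntegral_union (Ioc_disjoint_Ioi le_rfl) measurableSet_Ioi hg_Ioc hg_Ioi1,
      Ioc_union_Ioi_eq_Ioi zero_le_one]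
  have hmain : ∫ s in (0:ℝ)..1, f s < Real.Gamma (1 - lam) / α * L ^ (lam - 1) := by
    rw [← hg_val, hsplit]
    linarith
  -- the second term
  have hsecond : Real.exp (-1) * δ ≤ (1 - lam) ^ (1 - lam) * Real.exp (lam - 2) * L ^ (lam - 1) := by
    set c : ℝ := 1 - lam with hcdef
    have hc : 0 < c := by linarith
    have hδexp : δ = Real.exp (-L) := by
      rw [← Real.exp_log hδ0, hlogδ]
    have hcc : c ^ c = Real.exp (c * Real.log c) := by rw [Real.rpow_def_of_pos hc, mul_comm]
    have hLpow : L ^ (lam - 1) = Real.exp ((lam - 1) * Real.log L) := by rw [Real.rpow_def_of_pos hL, mul_comm]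
    rw [hδexp, hcc, hLpow, ← Real.exp_add, ← Real.exp_add, ← Real.exp_add]
    apply Real.exp_le_exp.mpr
    have hlog := Real.log_le_sub_one_of_pos (x := L / c) (by positivity)
    rw [Real.log_div (ne_of_gt hL) (ne_of_gt hc)] at hlog
    have := mul_le_mul_of_nonneg_left hlog hc.le
    have hc' : c * (L / c - 1) = L - c := by field_simp
    rw [hc'] at this
    have hl1 : (lam - 1) * Real.log L = -(c * Real.log L) := by rw [hcdef]; ring
    nlinarith [this]
  calc (∫ s in (0:ℝ)..1, f s) + Real.exp (-1) * δ
      < Real.Gamma (1 - lam) / α * L ^ (lam - 1)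
        + (1 - lam) ^ (1 - lam) * Real.exp (lam - 2) * L ^ (lam - 1) := by
        linarith
    _ = (Real.Gamma (1 - lam) / α + (1 - lam) ^ (1 - lam) * Real.exp (lam - 2)) * L ^ (lam - 1) := by
        ring
end

section
/- Let λ ∈ (0,1), M > 0, and let f : (0,∞) → (0,∞) be non-increasing, log-convex, and satisfy f(τ) ≤ M τ^{-λ} for all τ > 0. Set C := 4·Γ(1-λ) + (1-λ)^{1-λ} e^{λ-2}. If t > 0 and E > 0 satisfy E ≤ ∫₀^∞ e^{-s} f(ts) ds, then f(t) ≥ M t^{-λ} · exp( - ( C·M·t^{-λ} / E )^{1/(1-λ)} ). -/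
open MeasureTheory

/-- Elementary bound: `e^{-L} ≤ c^c e^{-c} L^{-c}` for `c, L > 0`. -/
private lemma aux_exp_bound {c L : ℝ} (hc : 0 < c) (hL : 0 < L) :
    Real.exp (-L) ≤ c ^ c * Real.exp (-c) * L ^ (-c) := by
  have h1 : Real.log L - Real.log c ≤ L / c - 1 := by
    rw [← Real.log_div hL.ne' hc.ne']
    exact Real.log_le_sub_one_of_pos (by positivity)
  have h2 : c * (Real.log L - Real.log c) ≤ c * (L / c - 1) :=
    mul_le_mul_of_nonneg_left h1 hc.le
  have h3 : c * (L / c - 1) = L - c := by field_simp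
  have key : L ^ c * Real.exp (-L) ≤ c ^ c * Real.exp (-c) := by
    rw [Real.rpow_def_of_pos hL, Real.rpow_def_of_pos hc, ← Real.exp_add, ← Real.exp_add]
    apply Real.exp_le_exp.mpr
    nlinarith [h2, h3]
  have hLc : L ^ c * L ^ (-c) = 1 := by
    rw [← Real.rpow_add hL]; simp
  have h4 := mul_le_mul_of_nonneg_right key (Real.rpow_pos_of_pos hL (-c)).le
  calc Real.exp (-L) = L ^ c * Real.exp (-L) * L ^ (-c) := by
        rw [mul_comm (L ^ c) (Real.exp (-L)), mul_assoc, hLc, mul_one]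
    _ ≤ c ^ c * Real.exp (-c) * L ^ (-c) := h4

/-- The Gamma-type integral: integrability and value of `∫₀^∞ s^{-λ} e^{-bs} ds`. -/
private lemma aux_gamma_int {lam b : ℝ} (hlam0 : 0 < lam) (hlam1 : lam < 1) (hb : 0 < b) :
    IntegrableOn (fun s : ℝ => s ^ (-lam) * Real.exp (-(b * s))) (Set.Ioi 0) ∧
    ∫ s in Set.Ioi (0 : ℝ), s ^ (-lam) * Real.exp (-(b * s))
      = (1 / b) ^ (1 - lam) * Real.Gamma (1 - lam) := by
  constructor
  · have h := integrableOn_rpow_mul_exp_neg_mul_rpow (p := 1) (s := -lam) (b := b)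
      (by linarith) one_pos hb
    refine h.congr_fun (fun x _ => ?_) measurableSet_Ioi
    beta_reduce
    rw [Real.rpow_one, neg_mul]
  · have h := Real.integral_rpow_mul_exp_neg_mul_Ioi (a := 1 - lam) (r := b)
      (by linarith) hb
    rw [← h]
    refine setIntegral_congr_fun measurableSet_Ioi (fun x _ => ?_)
    norm_num

set_option maxHeartbeats 1000000 in
/-- Abstract core of the paper's main theorem: if `f : (0,∞) → (0,∞)` is non-increasing,
log-convex and satisfies `f τ ≤ M τ^(-λ)`, and `E > 0` is a lower bound for the Green's
function `∫₀^∞ e^(-s) f(ts) ds`, then with `C = 4Γ(1-λ) + (1-λ)^(1-λ) e^(λ-2)` one has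
`f t ≥ M t^(-λ) exp(-(C M t^(-λ) / E)^(1/(1-λ)))`. -/
theorem heat_kernel_lower_bound_abstract (f : ℝ → ℝ) (lam M C : ℝ)
    (hlam0 : 0 < lam) (hlam1 : lam < 1) (hM : 0 < M)
    (hf_pos : ∀ τ ∈ Set.Ioi (0 : ℝ), 0 < f τ)
    (hf_anti : AntitoneOn f (Set.Ioi (0 : ℝ)))
    (hf_logconvex : ConvexOn ℝ (Set.Ioi (0 : ℝ)) (fun τ => Real.log (f τ)))
    (hf_bound : ∀ τ ∈ Set.Ioi (0 : ℝ), f τ ≤ M * τ ^ (-lam))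
    (hC : C = 4 * Real.Gamma (1 - lam) + (1 - lam) ^ (1 - lam) * Real.exp (lam - 2))
    (t E : ℝ) (ht : 0 < t) (hE : 0 < E)
    (hGreen : E ≤ ∫ s in Set.Ioi (0 : ℝ), Real.exp (-s) * f (t * s)) :
    f t ≥ M * t ^ (-lam) * Real.exp (-(C * M * t ^ (-lam) / E) ^ (1 / (1 - lam))) := by
  have hGpos : 0 < Real.Gamma (1 - lam) := Real.Gamma_pos_of_pos (by linarith)
  have hCpos : 0 < C := by
    rw [hC]
    have h1 : (0:ℝ) < (1 - lam) ^ (1 - lam) := Real.rpow_pos_of_pos (by linarith) _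
    have h2 := Real.exp_pos (lam - 2)
    nlinarith
  have hD : 0 < M * t ^ (-lam) := by positivity
  set D : ℝ := M * t ^ (-lam) with hDdef
  have hft : 0 < f t := hf_pos t (Set.mem_Ioi.mpr ht)
  have hftD : f t ≤ D := hf_bound t (Set.mem_Ioi.mpr ht)
  set L : ℝ := Real.log (D / f t) with hLdef
  have hL0 : 0 ≤ L := Real.log_nonneg ((one_le_div hft).mpr hftD)
  have hfteq : f t = D * Real.exp (-L) := by
    rw [hLdef, Real.exp_neg, Real.exp_log (by positivity)]
    field_simp
  rw [show C * M * t ^ (-lam) = C * D from by rw [hDdef]; ring]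
  have hX0 : 0 ≤ (C * D / E) ^ (1 / (1 - lam)) := Real.rpow_nonneg (by positivity) _
  suffices hLX : L ≤ (C * D / E) ^ (1 / (1 - lam)) by
    rw [ge_iff_le, hfteq]
    exact mul_le_mul_of_nonneg_left (Real.exp_le_exp.mpr (neg_le_neg hLX)) hD.le
  rcases eq_or_lt_of_le hL0 with hL | hL
  · exact hL ▸ hX0
  -- Main case: L > 0.  Key claim: E ≤ C * D * L ^ (lam - 1)
  have key : E ≤ C * D * L ^ (lam - 1) := by
    have hb0 : 0 < 3 / 4 * L := by linarith
    set b : ℝ := 3 / 4 * L with hbdef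
    set g : ℝ → ℝ := fun s =>
      if s ≤ 1 then D * 4 ^ lam * (s ^ (-lam) * Real.exp (-(b * s)))
      else D * Real.exp (-L) * Real.exp (-s) with hg
    -- pointwise bound
    have hpt : ∀ s ∈ Set.Ioi (0 : ℝ), Real.exp (-s) * f (t * s) ≤ g s := by
      intro s hs
      have hs0 : 0 < s := hs
      have hts : 0 < t * s := mul_pos ht hs0
      by_cases hs1 : s ≤ 1
      · have hgeq : g s = D * 4 ^ lam * (s ^ (-lam) * Real.exp (-(b * s))) := by
          simp only [hg]; rw [if_pos hs1]
        rw [hgeq]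
        have h4s : 0 < 4 - s := by linarith
        set p : ℝ := 3 * s / (4 - s) with hp
        have hp0 : 0 < p := by positivity
        have hp1 : p ≤ 1 := by rw [hp, div_le_one h4s]; linarith
        have hts4 : (0 : ℝ) < t * s / 4 := by positivity
        have hcombo : (1 - p) * (t * s / 4) + p * t = t * s := by
          rw [hp]; field_simp; ring
        have hconv := hf_logconvex.2 (Set.mem_Ioi.mpr hts4) (Set.mem_Ioi.mpr ht)
          (by linarith : (0:ℝ) ≤ 1 - p) hp0.le (by ring : (1 - p) + p = 1)
        simp only [smul_eq_mul] at hconv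
        rw [hcombo] at hconv
        have hfts : f (t * s) ≤ f (t * s / 4) ^ (1 - p) * f t ^ p := by
          have h1 : f (t * s) = Real.exp (Real.log (f (t * s))) :=
            (Real.exp_log (hf_pos _ (Set.mem_Ioi.mpr hts))).symm
          rw [h1, Real.rpow_def_of_pos (hf_pos _ (Set.mem_Ioi.mpr hts4)),
            Real.rpow_def_of_pos hft, ← Real.exp_add]
          exact Real.exp_le_exp.mpr (by nlinarith [hconv])
        have hstep1 : f (t * s / 4) ^ (1 - p) * f t ^ p
            ≤ (M * (t * s / 4) ^ (-lam)) ^ (1 - p) * (D * Real.exp (-L)) ^ p := by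
          rw [← hfteq]
          exact mul_le_mul_of_nonneg_right
            (Real.rpow_le_rpow (hf_pos _ (Set.mem_Ioi.mpr hts4)).le
              (hf_bound _ (Set.mem_Ioi.mpr hts4)) (by linarith))
            (Real.rpow_nonneg hft.le p)
        have ha : M * (t * s / 4) ^ (-lam) = D * (s / 4) ^ (-lam) := by
          rw [show t * s / 4 = t * (s / 4) by ring,
            Real.mul_rpow ht.le (by positivity), hDdef]; ring
        have hDD : D ^ (1 - p) * D ^ p = D := by
          rw [← Real.rpow_add hD]; norm_num
        have hM1 : (M * (t * s / 4) ^ (-lam)) ^ (1 - p) * (D * Real.exp (-L)) ^ p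
            = D * ((s / 4) ^ (-lam)) ^ (1 - p) * Real.exp (-L) ^ p := by
          rw [ha, Real.mul_rpow hD.le (by positivity),
            Real.mul_rpow hD.le (Real.exp_nonneg _)]
          calc D ^ (1 - p) * ((s / 4) ^ (-lam)) ^ (1 - p) * (D ^ p * Real.exp (-L) ^ p)
              = (D ^ (1 - p) * D ^ p) * (((s / 4) ^ (-lam)) ^ (1 - p) * Real.exp (-L) ^ p) := by
                ring
            _ = D * ((s / 4) ^ (-lam)) ^ (1 - p) * Real.exp (-L) ^ p := by
                rw [hDD]; ring
        have hfac : ((s / 4 : ℝ) ^ (-lam)) ^ (1 - p) ≤ 4 ^ lam * s ^ (-lam) := by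
          rw [← Real.rpow_mul (by positivity : (0:ℝ) ≤ s / 4)]
          have hx2 : (s / 4 : ℝ) ^ (-lam * (1 - p)) ≤ (s / 4) ^ (-lam) :=
            Real.rpow_le_rpow_of_exponent_ge (by positivity) (by linarith)
              (by nlinarith : -lam ≤ -lam * (1 - p))
          have hx3 : (s / 4 : ℝ) ^ (-lam) = 4 ^ lam * s ^ (-lam) := by
            rw [Real.div_rpow hs0.le (by norm_num), div_eq_mul_inv,
              show ((4:ℝ) ^ (-lam))⁻¹ = 4 ^ lam from by
                rw [← Real.rpow_neg (by norm_num), neg_neg]]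
            ring
          linarith [hx2, hx3.le, hx3.ge]
        have hx4 : Real.exp (-L) ^ p ≤ Real.exp (-(b * s)) := by
          rw [← Real.exp_mul]
          apply Real.exp_le_exp.mpr
          have hps : (3 / 4 : ℝ) * s ≤ p := by
            rw [hp, le_div_iff₀ h4s]; nlinarith
          rw [hbdef]
          nlinarith [mul_le_mul_of_nonneg_left hps hL.le]
        calc Real.exp (-s) * f (t * s) ≤ 1 * f (t * s) := by
              gcongr
              · exact (hf_pos _ (Set.mem_Ioi.mpr hts)).le
              · exact Real.exp_le_one_iff.mpr (by linarith)
          _ = f (t * s) := one_mul _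
          _ ≤ f (t * s / 4) ^ (1 - p) * f t ^ p := hfts
          _ ≤ (M * (t * s / 4) ^ (-lam)) ^ (1 - p) * (D * Real.exp (-L)) ^ p := hstep1
          _ = D * ((s / 4) ^ (-lam)) ^ (1 - p) * Real.exp (-L) ^ p := hM1
          _ ≤ D * (4 ^ lam * s ^ (-lam)) * Real.exp (-(b * s)) := by
              gcongr <;> first
                | exact hfac
                | exact hx4
                | positivity
                | exact Real.rpow_nonneg (by positivity) _
          _ = D * 4 ^ lam * (s ^ (-lam) * Real.exp (-(b * s))) := by ring
      · push_neg at hs1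
        have hgeq : g s = D * Real.exp (-L) * Real.exp (-s) := by
          simp only [hg]; rw [if_neg (not_le.mpr hs1)]
        rw [hgeq]
        have h1 : f (t * s) ≤ f t := by
          refine hf_anti (Set.mem_Ioi.mpr ht) (Set.mem_Ioi.mpr hts) ?_
          nlinarith
        rw [hfteq] at h1
        calc Real.exp (-s) * f (t * s) ≤ Real.exp (-s) * (D * Real.exp (-L)) :=
              mul_le_mul_of_nonneg_left h1 (Real.exp_nonneg _)
          _ = D * Real.exp (-L) * Real.exp (-s) := by ring
    obtain ⟨hint0, hval0⟩ := aux_gamma_int hlam0 hlam1 hb0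
    have hint1 : IntegrableOn g (Set.Ioc 0 1) := by
      refine IntegrableOn.congr_fun
        (MeasureTheory.IntegrableOn.mono_set (hint0.const_mul (D * 4 ^ lam))
          Set.Ioc_subset_Ioi_self)
        (fun x hx => ?_) measurableSet_Ioc
      simp only [hg]; rw [if_pos hx.2, mul_assoc]
    have hint2' : IntegrableOn (fun s : ℝ => D * Real.exp (-L) * Real.exp (-s))
        (Set.Ioi 1) := by
      have h := (exp_neg_integrableOn_Ioi (1:ℝ) one_pos).const_mul (D * Real.exp (-L))
      simpa [IntegrableOn] using h
    have hint2 : IntegrableOn g (Set.Ioi 1) := by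
      refine IntegrableOn.congr_fun hint2' (fun x hx => ?_) measurableSet_Ioi
      simp only [hg]; rw [if_neg (not_le.mpr hx)]
    have hintU : IntegrableOn g (Set.Ioi 0) := by
      rw [← Set.Ioc_union_Ioi_eq_Ioi (zero_le_one (α := ℝ))]
      exact hint1.union hint2
    have hEg : E ≤ ∫ s in Set.Ioi (0 : ℝ), g s := by
      refine hGreen.trans (integral_mono_of_nonneg ?_ hintU ?_)
      · filter_upwards [ae_restrict_mem measurableSet_Ioi] with s hs
        exact mul_nonneg (Real.exp_nonneg _) (hf_pos _ (Set.mem_Ioi.mpr (mul_pos ht hs))).le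
      · filter_upwards [ae_restrict_mem measurableSet_Ioi] with s hs
        exact hpt s hs
    have hsplit : (∫ s in Set.Ioi (0:ℝ), g s)
        = (∫ s in Set.Ioc (0:ℝ) 1, g s) + ∫ s in Set.Ioi (1:ℝ), g s := by
      rw [← Set.Ioc_union_Ioi_eq_Ioi (zero_le_one (α := ℝ))]
      exact setIntegral_union (Set.Ioc_disjoint_Ioi le_rfl) measurableSet_Ioi hint1 hint2
    -- First piece
    have hI1 : (∫ s in Set.Ioc (0:ℝ) 1, g s)
        ≤ 4 * Real.Gamma (1 - lam) * D * L ^ (lam - 1) := by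
      have e1 : (∫ s in Set.Ioc (0:ℝ) 1, g s)
          = ∫ s in Set.Ioc (0:ℝ) 1, D * 4 ^ lam * (s ^ (-lam) * Real.exp (-(b * s))) :=
        setIntegral_congr_fun measurableSet_Ioc (fun x hx => by
          simp only [hg]; rw [if_pos hx.2])
      have e2 : (∫ s in Set.Ioc (0:ℝ) 1, D * 4 ^ lam * (s ^ (-lam) * Real.exp (-(b * s))))
          ≤ ∫ s in Set.Ioi (0:ℝ), D * 4 ^ lam * (s ^ (-lam) * Real.exp (-(b * s))) := by
        refine setIntegral_mono_set (by simpa [mul_assoc, IntegrableOn] using hint0.const_mul (D * 4 ^ lam))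
          ?_ (HasSubset.Subset.eventuallyLE Set.Ioc_subset_Ioi_self)
        filter_upwards [ae_restrict_mem measurableSet_Ioi] with x hx
        have : (0:ℝ) < x := hx
        positivity
      have e3 : (∫ s in Set.Ioi (0:ℝ), D * 4 ^ lam * (s ^ (-lam) * Real.exp (-(b * s))))
          = D * 4 ^ lam * ((1 / b) ^ (1 - lam) * Real.Gamma (1 - lam)) := by
        rw [integral_const_mul, hval0]
      have hbinv : (1 / b : ℝ) ^ (1 - lam) = b ^ (lam - 1) := by
        rw [Real.rpow_def_of_pos (by positivity : (0:ℝ) < 1 / b), Real.rpow_def_of_pos hb0,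
          Real.log_div one_ne_zero hb0.ne', Real.log_one]
        congr 1; ring
      have hbsplit : (b : ℝ) ^ (lam - 1) = (3/4 : ℝ) ^ (lam - 1) * L ^ (lam - 1) := by
        rw [hbdef, Real.mul_rpow (by norm_num) hL0]
      have h34 : (3/4 : ℝ) ^ (lam - 1) = 3 ^ (lam - 1) * 4 ^ (1 - lam) := by
        rw [Real.div_rpow (by norm_num) (by norm_num), div_eq_mul_inv,
          show ((4:ℝ) ^ (lam - 1))⁻¹ = 4 ^ (1 - lam) from by
            rw [← Real.rpow_neg (by norm_num)]; congr 1; ring]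
      have h44 : (4:ℝ) ^ lam * 4 ^ (1 - lam) = 4 := by
        rw [← Real.rpow_add (by norm_num)]; norm_num
      have h31 : (3:ℝ) ^ (lam - 1) ≤ 1 :=
        Real.rpow_le_one_of_one_le_of_nonpos (by norm_num) (by linarith)
      have h30 : (0:ℝ) ≤ (3:ℝ) ^ (lam - 1) := Real.rpow_nonneg (by norm_num) _
      have hcoef : (4:ℝ) ^ lam * (3/4 : ℝ) ^ (lam - 1) ≤ 4 := by
        rw [h34]
        calc (4:ℝ) ^ lam * (3 ^ (lam - 1) * 4 ^ (1 - lam))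
            = (4 ^ lam * 4 ^ (1 - lam)) * 3 ^ (lam - 1) := by ring
          _ = 4 * 3 ^ (lam - 1) := by rw [h44]
          _ ≤ 4 * 1 := by nlinarith
          _ = 4 := by norm_num
      rw [e1]
      refine e2.trans ?_
      rw [e3, hbinv, hbsplit]
      have hLl : (0:ℝ) ≤ L ^ (lam - 1) := Real.rpow_nonneg hL0 _
      have h4l : (0:ℝ) ≤ (4:ℝ) ^ lam := Real.rpow_nonneg (by norm_num) _
      have h34l : (0:ℝ) ≤ (3/4:ℝ) ^ (lam - 1) := Real.rpow_nonneg (by norm_num) _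
      nlinarith [mul_le_mul_of_nonneg_right hcoef (mul_nonneg hLl hGpos.le),
        mul_pos hD (Real.rpow_pos_of_pos hL (lam - 1))]
    -- Second piece
    have hI2 : (∫ s in Set.Ioi (1:ℝ), g s)
        ≤ (1 - lam) ^ (1 - lam) * Real.exp (lam - 2) * D * L ^ (lam - 1) := by
      have e1 : (∫ s in Set.Ioi (1:ℝ), g s)
          = ∫ s in Set.Ioi (1:ℝ), D * Real.exp (-L) * Real.exp (-s) :=
        setIntegral_congr_fun measurableSet_Ioi (fun x hx => by
          simp only [hg]; rw [if_neg (not_le.mpr hx)])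
      have e2 : (∫ s in Set.Ioi (1:ℝ), D * Real.exp (-L) * Real.exp (-s))
          = D * Real.exp (-L) * Real.exp (-1) := by
        rw [integral_const_mul, integral_exp_neg_Ioi]
      have hexpb := aux_exp_bound (c := 1 - lam) (by linarith) hL
      have hLl : L ^ (-(1 - lam)) = L ^ (lam - 1) := by congr 1; ring
      rw [hLl] at hexpb
      rw [e1, e2]
      have hee : Real.exp (-(1 - lam)) * Real.exp (-1) = Real.exp (lam - 2) := by
        rw [← Real.exp_add]; congr 1; ring
      calc D * Real.exp (-L) * Real.exp (-1)
          ≤ D * ((1 - lam) ^ (1 - lam) * Real.exp (-(1 - lam)) * L ^ (lam - 1))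
              * Real.exp (-1) := by
            gcongr
          _ = (1 - lam) ^ (1 - lam) * Real.exp (lam - 2) * D * L ^ (lam - 1) := by
            rw [← hee]; ring
    calc E ≤ ∫ s in Set.Ioi (0:ℝ), g s := hEg
      _ = (∫ s in Set.Ioc (0:ℝ) 1, g s) + ∫ s in Set.Ioi (1:ℝ), g s := hsplit
      _ ≤ 4 * Real.Gamma (1 - lam) * D * L ^ (lam - 1)
          + (1 - lam) ^ (1 - lam) * Real.exp (lam - 2) * D * L ^ (lam - 1) :=
        add_le_add hI1 hI2
      _ = C * D * L ^ (lam - 1) := by rw [hC]; ring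
  -- conclude from key
  have h5 : E * L ^ (1 - lam) ≤ C * D := by
    calc E * L ^ (1 - lam) ≤ C * D * L ^ (lam - 1) * L ^ (1 - lam) :=
          mul_le_mul_of_nonneg_right key (Real.rpow_nonneg hL0 _)
      _ = C * D * (L ^ (lam - 1) * L ^ (1 - lam)) := by ring
      _ = C * D := by rw [← Real.rpow_add hL]; norm_num
  have h6 : L ^ (1 - lam) ≤ C * D / E := (le_div_iff₀ hE).mpr (by linarith [h5])
  calc L = (L ^ (1 - lam)) ^ (1 / (1 - lam)) := by
        rw [← Real.rpow_mul hL0, mul_one_div, div_self (by linarith : (1:ℝ) - lam ≠ 0),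
          Real.rpow_one]
    _ ≤ (C * D / E) ^ (1 / (1 - lam)) :=
        Real.rpow_le_rpow (Real.rpow_nonneg hL0 _) h6
          (le_of_lt (div_pos one_pos (by linarith)))
end
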